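/- Let B be a bounded selfadjoint operator on a complex Hilbert space H. Then B is S-weakly complementable for every closed subspace S of H if and only if B is semidefinite (i.e., B is positive or −B is positive). -/

import Mathlib

set_option synthInstance.maxHeartbeats 1000000
set_option maxHeartbeats 1000000


open ContinuousLinearMap

noncomputable section

variable {H : Type*} [NormedAddCommGroup H] [InnerProductSpace ℂ H] [CompleteSpace H]

/-- The orthogonal projection onto a closed subspace `S`, as an endomorphism of `H`. -/
def projL (S : Submodule ℂ H) [Submodule.HasOrthogonalProjection S] : H →L[ℂ] H :=
  S.subtypeL.comp (Submodule.orthogonalProjectionOnto S)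

/-- The corner `a = P_S B P_S` of the block decomposition of `B` w.r.t. `H = S ⊕ Sᗮ`. -/
def blockA (B : H →L[ℂ] H) (S : Submodule ℂ H) [Submodule.HasOrthogonalProjection S] : H →L[ℂ] H :=
  projL S * B * projL S

/-- The corner `b = P_S B P_{Sᗮ}` of the block decomposition of `B` w.r.t. `H = S ⊕ Sᗮ`. -/
def blockB (B : H →L[ℂ] H) (S : Submodule ℂ H) [Submodule.HasOrthogonalProjection S] : H →L[ℂ] H :=
  projL S * B * (1 - projL S)

/-- The corner `c = P_{Sᗮ} B P_{Sᗮ}` of the block decomposition of `B` w.r.t. `H = S ⊕ Sᗮ`. -/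
def blockC (B : H →L[ℂ] H) (S : Submodule ℂ H) [Submodule.HasOrthogonalProjection S] : H →L[ℂ] H :=
  (1 - projL S) * B * (1 - projL S)

/-- `m = |a|^{1/2}`: `m` is the (unique) positive fourth root of `a⋆ a`. -/
def IsSqrtAbs (a m : H →L[ℂ] H) : Prop :=
  m.IsPositive ∧ m ^ 4 = adjoint a * a

/-- `B` is `S`-weakly complementable: `range b ⊆ range |a|^{1/2}`. -/
def IsWeaklyComplementable (B : H →L[ℂ] H) (S : Submodule ℂ H)
    [Submodule.HasOrthogonalProjection S] : Prop :=
  ∃ m : H →L[ℂ] H, IsSqrtAbs (blockA B S) m ∧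
    LinearMap.range (blockB B S : H →ₗ[ℂ] H) ≤ LinearMap.range (m : H →ₗ[ℂ] H)

/-- `B` is `S`-complementable: `H = S + B⁻¹(Sᗮ)`. -/
def IsComplementable (B : H →L[ℂ] H) (S : Submodule ℂ H) : Prop :=
  S ⊔ Sᗮ.comap (B : H →ₗ[ℂ] H) = ⊤

/-- The set `P(B,S)` of `B`-selfadjoint bounded idempotents onto `S`. -/
def projSet (B : H →L[ℂ] H) (S : Submodule ℂ H) : Set (H →L[ℂ] H) :=
  {Q | Q * Q = Q ∧ LinearMap.range (Q : H →ₗ[ℂ] H) = S ∧ B * Q = adjoint Q * B}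

/-- `Y` is the Schur complement `B_{/S} = [[0,0],[0, c - f⋆ u f]]`, where `f` is the reduced
solution of `b = |a|^{1/2} x` and `a = u |a|` is the polar decomposition of `a`. -/
def IsSchur (B : H →L[ℂ] H) (S : Submodule ℂ H) [Submodule.HasOrthogonalProjection S]
    (Y : H →L[ℂ] H) : Prop :=
  ∃ m u f : H →L[ℂ] H,
    IsSqrtAbs (blockA B S) m ∧
    LinearMap.ker (u : H →ₗ[ℂ] H) = LinearMap.ker (blockA B S : H →ₗ[ℂ] H) ∧
    (∀ x ∈ (LinearMap.ker (blockA B S : H →ₗ[ℂ] H))ᗮ, ‖u x‖ = ‖x‖) ∧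
    blockA B S = u * m ^ 2 ∧
    m * f = blockB B S ∧
    LinearMap.range (f : H →ₗ[ℂ] H) ≤ (LinearMap.range (m : H →ₗ[ℂ] H)).topologicalClosure ∧
    Y = blockC B S - adjoint f * (u * f)

/-- The set `M⁻(B,T)`. -/
def Mminus (B : H →L[ℂ] H) (T : Submodule ℂ H) : Set (H →L[ℂ] H) :=
  {X | IsSelfAdjoint X ∧ (B - X).IsPositive ∧ LinearMap.range (X : H →ₗ[ℂ] H) ≤ T}

/-- The set `M⁺(B,T)`. -/
def Mplus (B : H →L[ℂ] H) (T : Submodule ℂ H) : Set (H →L[ℂ] H) :=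
  {X | IsSelfAdjoint X ∧ (X - B).IsPositive ∧ LinearMap.range (X : H →ₗ[ℂ] H) ≤ T}

/-- `Y` is the Loewner maximum of `M`. -/
def IsMaxOf (M : Set (H →L[ℂ] H)) (Y : H →L[ℂ] H) : Prop :=
  Y ∈ M ∧ ∀ X ∈ M, (Y - X).IsPositive

/-- `Z` is the Loewner minimum of `M`. -/
def IsMinOf (M : Set (H →L[ℂ] H)) (Z : H →L[ℂ] H) : Prop :=
  Z ∈ M ∧ ∀ X ∈ M, (X - Z).IsPositive

/-- `Z` is the greatest lower bound of `M` in the Loewner order on selfadjoint operators. -/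
def IsGLBOf (M : Set (H →L[ℂ] H)) (Z : H →L[ℂ] H) : Prop :=
  IsSelfAdjoint Z ∧ (∀ X ∈ M, (X - Z).IsPositive) ∧
    ∀ F : H →L[ℂ] H, IsSelfAdjoint F → (∀ X ∈ M, (X - F).IsPositive) → (Z - F).IsPositive

/-- `Y` is the least upper bound of `M` in the Loewner order on selfadjoint operators. -/
def IsLUBOf (M : Set (H →L[ℂ] H)) (Y : H →L[ℂ] H) : Prop :=
  IsSelfAdjoint Y ∧ (∀ X ∈ M, (Y - X).IsPositive) ∧
    ∀ F : H →L[ℂ] H, IsSelfAdjoint F → (∀ X ∈ M, (F - X).IsPositive) → (F - Y).IsPositive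

/-- A decomposition `S = S₊ ⊕_B S₋` into a `B`-nonnegative and a `B`-nonpositive part. -/
def IsWDecomp (B : H →L[ℂ] H) (S Sp Sm : Submodule ℂ H) : Prop :=
  (∀ x ∈ Sp, ∀ y ∈ Sm, (inner ℂ x y : ℂ) = 0) ∧
  Sp ⊔ Sm = S ∧
  (∀ x ∈ Sp, 0 ≤ (inner ℂ (B x) x : ℂ).re) ∧
  (∀ x ∈ Sm, (inner ℂ (B x) x : ℂ).re ≤ 0) ∧
  (∀ x ∈ Sp, ∀ y ∈ Sm, (inner ℂ (B x) y : ℂ) = 0)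

/-- `Y` is Krein's shorted operator `B_{/T}` of the positive operator `B` to `T`:
the Loewner maximum of `{X : 0 ≤ X ≤ B, range X ⊆ Tᗮ}`. -/
def IsShort (B : H →L[ℂ] H) (T : Submodule ℂ H) (Y : H →L[ℂ] H) : Prop :=
  (Y.IsPositive ∧ (B - Y).IsPositive ∧ LinearMap.range (Y : H →ₗ[ℂ] H) ≤ Tᗮ) ∧
    ∀ X : H →L[ℂ] H, X.IsPositive → (B - X).IsPositive → LinearMap.range (X : H →ₗ[ℂ] H) ≤ Tᗮ →
      (Y - X).IsPositive

/-- The set `{R⋆ Q⋆ B Q R : Q² = Q, N(Q) = T}`. -/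
def comprSet2 (B R : H →L[ℂ] H) (T : Submodule ℂ H) : Set (H →L[ℂ] H) :=
  {X | ∃ Q : H →L[ℂ] H, Q * Q = Q ∧ LinearMap.ker (Q : H →ₗ[ℂ] H) = T ∧
    X = adjoint R * (adjoint Q * B * Q) * R}

/-- The set `{Q⋆ B Q : Q² = Q, N(Q) = S}`. -/
def comprSet1 (B : H →L[ℂ] H) (S : Submodule ℂ H) : Set (H →L[ℂ] H) :=
  {X | ∃ Q : H →L[ℂ] H, Q * Q = Q ∧ LinearMap.ker (Q : H →ₗ[ℂ] H) = S ∧ X = adjoint Q * B * Q}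

/-- The set `N⁻(W,T)` of the Krein space `(H, [x,y] = ⟨Jx,y⟩)`. -/
def Nminus (J W : H →L[ℂ] H) (T : Submodule ℂ H) : Set (H →L[ℂ] H) :=
  {X | IsSelfAdjoint (J * X) ∧ (J * (W - X)).IsPositive ∧ LinearMap.range (X : H →ₗ[ℂ] H) ≤ T}

/-- The set `N⁺(W,T)` of the Krein space `(H, [x,y] = ⟨Jx,y⟩)`. -/
def Nplus (J W : H →L[ℂ] H) (T : Submodule ℂ H) : Set (H →L[ℂ] H) :=
  {X | IsSelfAdjoint (J * X) ∧ (J * (X - W)).IsPositive ∧ LinearMap.range (X : H →ₗ[ℂ] H) ≤ T}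

/-- `Y` is the maximum of `M` in the Krein order induced by `J`. -/
def KMaxOf (J : H →L[ℂ] H) (M : Set (H →L[ℂ] H)) (Y : H →L[ℂ] H) : Prop :=
  Y ∈ M ∧ ∀ X ∈ M, (J * (Y - X)).IsPositive

/-- `Z` is the minimum of `M` in the Krein order induced by `J`. -/
def KMinOf (J : H →L[ℂ] H) (M : Set (H →L[ℂ] H)) (Z : H →L[ℂ] H) : Prop :=
  Z ∈ M ∧ ∀ X ∈ M, (J * (X - Z)).IsPositive

/-- `E` is a densely defined projection (idempotent) with kernel `N`. -/
def IsDDProj (N : Submodule ℂ H) (E : H →ₗ.[ℂ] H) : Prop :=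
  Dense (E.domain : Set H) ∧
  (∃ h : ∀ x : E.domain, E x ∈ E.domain, ∀ x : E.domain, E ⟨E x, h x⟩ = E x) ∧
  (LinearMap.ker E.toFun).map E.domain.subtype = N

/-- `G` is the (everywhere defined, bounded) composition `E ∘ T`; in particular
`range T ⊆ dom E`. -/
def IsBddComp (E : H →ₗ.[ℂ] H) (T G : H →L[ℂ] H) : Prop :=
  ∃ h : ∀ x : H, T x ∈ E.domain, ∀ x : H, G x = E ⟨T x, h x⟩


section Aux

theorem norm_adj_eq' (T A : H →L[ℂ] H) (hA : IsSelfAdjoint A) (hA2 : A * A = T * adjoint T)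
    (w : H) : ‖adjoint T w‖ = ‖A w‖ := by
  have h1 : (inner ℂ (adjoint T w) (adjoint T w) : ℂ) = inner ℂ ((A * A) w) w := by
    rw [adjoint_inner_right, hA2, ContinuousLinearMap.mul_apply]
  have h2 : (inner ℂ (A w) (A w) : ℂ) = inner ℂ ((A * A) w) w := by
    conv_lhs => rw [← hA.adjoint_eq, adjoint_inner_right, hA.adjoint_eq]
    rw [ContinuousLinearMap.mul_apply]
  rw [@norm_eq_sqrt_re_inner ℂ, @norm_eq_sqrt_re_inner ℂ, h1.trans h2.symm]

theorem factor_through' (T A : H →L[ℂ] H) (hA : IsSelfAdjoint A) (hA2 : A * A = T * adjoint T) :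
    ∃ V : H →L[ℂ] H, V.comp A = adjoint T := by
  have key : ∀ w, ‖adjoint T w‖ = ‖A w‖ := norm_adj_eq' T A hA hA2
  set Aₗ : H →ₗ[ℂ] H := (A : H →ₗ[ℂ] H) with hAl
  set Tadj : H →ₗ[ℂ] H := ((adjoint T : H →L[ℂ] H) : H →ₗ[ℂ] H) with hTl
  have hker : LinearMap.ker Aₗ ≤ LinearMap.ker Tadj := by
    intro w hw
    rw [LinearMap.mem_ker] at hw ⊢
    have h0 : ‖adjoint T w‖ = 0 := by
      rw [key w]; simp only [hAl] at hw; simp [show A w = 0 from hw]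
    exact norm_eq_zero.mp h0
  set V₁ : ↥(LinearMap.range Aₗ) →ₗ[ℂ] H :=
    ((LinearMap.ker Aₗ).liftQ Tadj hker) ∘ₗ (LinearMap.quotKerEquivRange Aₗ).symm.toLinearMap
    with hV₁
  have hV₁apply : ∀ w : H, V₁ ⟨A w, LinearMap.mem_range_self Aₗ w⟩ = adjoint T w := by
    intro w
    have h1 : (LinearMap.quotKerEquivRange Aₗ) (Submodule.Quotient.mk w)
        = ⟨A w, LinearMap.mem_range_self Aₗ w⟩ := by
      apply Subtype.ext
      simp only [LinearMap.quotKerEquivRange_apply_mk]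
      simp [hAl]
    rw [hV₁]
    simp only [LinearMap.coe_comp, Function.comp_apply, LinearEquiv.coe_toLinearMap]
    rw [← h1, LinearEquiv.symm_apply_apply, Submodule.liftQ_apply]
    simp [hTl]
  have hV₁norm : ∀ u : ↥(LinearMap.range Aₗ), ‖V₁ u‖ = ‖u‖ := by
    rintro ⟨y, hy⟩
    obtain ⟨w, rfl⟩ := hy
    rw [show (⟨Aₗ w, ⟨w, rfl⟩⟩ : ↥(LinearMap.range Aₗ))
        = ⟨A w, LinearMap.mem_range_self Aₗ w⟩ from rfl, hV₁apply w, key w]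
    rfl
  set V₁ᵢ : ↥(LinearMap.range Aₗ) →ₗᵢ[ℂ] H := ⟨V₁, hV₁norm⟩ with hV₁ᵢ
  set K := (LinearMap.range Aₗ).topologicalClosure with hK
  set e : ↥(LinearMap.range Aₗ) →ₗᵢ[ℂ] ↥K :=
    ⟨Submodule.inclusion (LinearMap.range Aₗ).le_topologicalClosure, fun x => rfl⟩ with he
  have h_unif : IsUniformInducing e.toContinuousLinearMap := e.isometry.isUniformInducing
  have h_dense : DenseRange e.toContinuousLinearMap := by
    intro y
    have hy : (y : H) ∈ closure ((LinearMap.range Aₗ : Submodule ℂ H) : Set H) := by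
      rw [← Submodule.topologicalClosure_coe]; exact y.2
    rw [mem_closure_iff_seq_limit] at hy
    obtain ⟨s, hs, hlim⟩ := hy
    rw [mem_closure_iff_seq_limit]
    refine ⟨fun n => e.toContinuousLinearMap ⟨s n, hs n⟩, fun n => ⟨_, rfl⟩, ?_⟩
    rw [tendsto_subtype_rng]
    exact hlim
  set V₂ : ↥K →L[ℂ] H := V₁ᵢ.toContinuousLinearMap.extend e.toContinuousLinearMap
  set V : H →L[ℂ] H := V₂.comp (Submodule.orthogonalProjectionOnto K) with hV
  refine ⟨V, ?_⟩
  ext w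
  have hmemK : A w ∈ K := (LinearMap.range Aₗ).le_topologicalClosure (LinearMap.mem_range_self Aₗ w)
  have hproj : Submodule.orthogonalProjectionOnto K (A w) = ⟨A w, hmemK⟩ :=
    Submodule.orthogonalProjectionOnto_mem_subspace_eq_self (⟨A w, hmemK⟩ : ↥K)
  have hcoe : (⟨A w, hmemK⟩ : ↥K) = e.toContinuousLinearMap ⟨A w, LinearMap.mem_range_self Aₗ w⟩ :=
    rfl
  calc V (A w) = V₂ (Submodule.orthogonalProjectionOnto K (A w)) := rfl
    _ = V₂ (e.toContinuousLinearMap ⟨A w, LinearMap.mem_range_self Aₗ w⟩) := by rw [hproj, hcoe]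
    _ = V₁ᵢ.toContinuousLinearMap ⟨A w, LinearMap.mem_range_self Aₗ w⟩ :=
        ContinuousLinearMap.extend_eq _ h_dense h_unif _
    _ = adjoint T w := hV₁apply w

theorem douglas' (T : H →L[ℂ] H) :
    LinearMap.range (T : H →ₗ[ℂ] H) ≤
      LinearMap.range ((CFC.sqrt (T * adjoint T) : H →L[ℂ] H) : H →ₗ[ℂ] H) := by
  have hTT : (0 : H →L[ℂ] H) ≤ T * adjoint T := by
    rw [← star_eq_adjoint]; exact mul_star_self_nonneg T
  set A := CFC.sqrt (T * adjoint T) with hA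
  have hA0 : (0 : H →L[ℂ] H) ≤ A := CFC.sqrt_nonneg _
  have hAsa : IsSelfAdjoint A := IsSelfAdjoint.of_nonneg hA0
  have hA2 : A * A = T * adjoint T := CFC.sqrt_mul_sqrt_self _ hTT
  obtain ⟨V, hV⟩ := factor_through' T A hAsa hA2
  have hT : T = A.comp (adjoint V) := by
    have h := congrArg adjoint hV
    rw [adjoint_comp, adjoint_adjoint, hAsa.adjoint_eq] at h
    exact h.symm
  rintro y ⟨x, rfl⟩
  exact ⟨adjoint V x, by rw [hT]; rfl⟩

theorem wcomp_of_pos' (B : H →L[ℂ] H) (hB : B.IsPositive) (S : Submodule ℂ H) [CompleteSpace S] :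
    IsWeaklyComplementable B S := by
  have hB0 : (0 : H →L[ℂ] H) ≤ B := (nonneg_iff_isPositive B).mpr hB
  set P := projL S with hP
  have hPsa : IsSelfAdjoint P := isSelfAdjoint_starProjection S
  set C := CFC.sqrt B with hCc
  have hC0 : (0 : H →L[ℂ] H) ≤ C := CFC.sqrt_nonneg _
  have hCsa : IsSelfAdjoint C := IsSelfAdjoint.of_nonneg hC0
  have hC2 : C * C = B := CFC.sqrt_mul_sqrt_self B hB0
  set T := P * C with hT
  have hTTa : T * adjoint T = blockA B S := by
    rw [hT, ← star_eq_adjoint, star_mul, hCsa.star_eq, hPsa.star_eq,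
      show P * C * (C * P) = P * (C * C) * P by noncomm_ring, hC2]
    rfl
  have hTT0 : (0 : H →L[ℂ] H) ≤ T * adjoint T := by
    rw [← star_eq_adjoint]; exact mul_star_self_nonneg T
  set m := CFC.sqrt (T * adjoint T) with hm
  have hm2 : m * m = blockA B S := by
    rw [hm, CFC.sqrt_mul_sqrt_self _ hTT0, hTTa]
  have hblockApos : (0 : H →L[ℂ] H) ≤ blockA B S := hTTa ▸ hTT0
  refine ⟨m, ⟨?_, ?_⟩, ?_⟩
  · exact (nonneg_iff_isPositive m).mp (CFC.sqrt_nonneg _)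
  · have hsa : IsSelfAdjoint (blockA B S) := IsSelfAdjoint.of_nonneg hblockApos
    rw [show (m ^ 4 : H →L[ℂ] H) = (m * m) * (m * m) by noncomm_ring, hm2,
      ← star_eq_adjoint, hsa.star_eq]
  · have h1 : LinearMap.range (blockB B S : H →ₗ[ℂ] H) ≤ LinearMap.range (T : H →ₗ[ℂ] H) := by
      rintro y ⟨x, rfl⟩
      refine ⟨(C * (1 - P)) x, ?_⟩
      show (P * C) ((C * (1 - P)) x) = blockB B S x
      rw [blockB]
      simp only [ContinuousLinearMap.mul_apply]
      rw [show C (C ((1 - P) x)) = (C * C) ((1 - P) x) from rfl, hC2]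
    exact h1.trans (douglas' T)

theorem eq_zero_of_sq_zero' (m : H →L[ℂ] H) (hsa : IsSelfAdjoint m) (h : m * m = 0) : m = 0 := by
  ext z
  have h1 : (inner ℂ (m z) (m z) : ℂ) = inner ℂ ((m * m) z) z := by
    conv_lhs => rw [← hsa.adjoint_eq, adjoint_inner_right, hsa.adjoint_eq]
    rw [ContinuousLinearMap.mul_apply]
  rw [h] at h1
  simp only [zero_apply, inner_zero_left] at h1
  simpa using inner_self_eq_zero.mp h1

theorem q_expand' (B : H →L[ℂ] H) (hB : IsSelfAdjoint B) (x y : H) (t : ℝ) :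
    (inner ℂ (B (x + (t:ℂ) • y)) (x + (t:ℂ) • y) : ℂ).re =
      (inner ℂ (B x) x : ℂ).re + 2 * (inner ℂ (B x) y : ℂ).re * t
        + (inner ℂ (B y) y : ℂ).re * t ^ 2 := by
  simp only [map_add, map_smul, inner_add_left, inner_add_right, inner_smul_left,
    inner_smul_right]
  simp [Complex.add_re, Complex.mul_re, Complex.conj_re, Complex.conj_im]
  have h3 := (isSelfAdjoint_iff_isSymmetric.mp hB) y x
  simp only [ContinuousLinearMap.coe_coe] at h3
  have h4 : (inner ℂ (B y) x : ℂ).re = (inner ℂ (B x) y : ℂ).re := by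
    rw [h3, ← inner_conj_symm, Complex.conj_re]
  rw [h4]
  ring

theorem exists_neutral' (B : H →L[ℂ] H) (hB : IsSelfAdjoint B)
    (hx : ∃ x, 0 < (inner ℂ (B x) x : ℂ).re) (hy : ∃ y, (inner ℂ (B y) y : ℂ).re < 0) :
    ∃ e : H, (inner ℂ (B e) e : ℂ).re = 0 ∧ B e ≠ 0 := by
  obtain ⟨x, hqx⟩ := hx
  obtain ⟨y, hqy⟩ := hy
  set qx := (inner ℂ (B x) x : ℂ).re
  set qy := (inner ℂ (B y) y : ℂ).re
  set β := (inner ℂ (B x) y : ℂ).re with hβ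
  have hqy0 : qy ≠ 0 := ne_of_lt hqy
  have hD : 0 < β ^ 2 - qx * qy := by nlinarith
  set s := Real.sqrt (β ^ 2 - qx * qy) with hsdef
  have hs : s ^ 2 = β ^ 2 - qx * qy := Real.sq_sqrt hD.le
  have hspos : 0 < s := Real.sqrt_pos.mpr hD
  set t₁ := (-β + s) / qy with ht₁
  set t₂ := (-β - s) / qy with ht₂
  have root : ∀ t : ℝ, qx + 2 * β * t + qy * t ^ 2 = 0 →
      (inner ℂ (B (x + (t:ℂ) • y)) (x + (t:ℂ) • y) : ℂ).re = 0 := by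
    intro t ht
    rw [q_expand' B hB x y t]
    linarith [ht]
  have root₁ : qx + 2 * β * t₁ + qy * t₁ ^ 2 = 0 := by
    rw [ht₁]; field_simp; nlinarith [hs]
  have root₂ : qx + 2 * β * t₂ + qy * t₂ ^ 2 = 0 := by
    rw [ht₂]; field_simp; nlinarith [hs]
  have hBy : B y ≠ 0 := by
    intro h
    have h0 : qy = 0 := by show (inner ℂ (B y) y : ℂ).re = 0; rw [h]; simp
    linarith
  by_cases hBe₁ : B (x + (t₁:ℂ) • y) = 0
  · refine ⟨x + (t₂:ℂ) • y, root t₂ root₂, ?_⟩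
    have hne : t₂ ≠ t₁ := by
      intro h
      rw [ht₂, ht₁, div_eq_div_iff hqy0 hqy0] at h
      nlinarith
    intro h
    apply hBy
    have : B (x + (t₂:ℂ) • y) - B (x + (t₁:ℂ) • y) = ((t₂ - t₁ : ℝ) : ℂ) • B y := by
      simp only [map_add, map_smul]
      push_cast
      rw [sub_smul]
      abel
    rw [h, hBe₁, sub_zero] at this
    have h2 : ((t₂ - t₁ : ℝ) : ℂ) • B y = 0 := this.symm
    rcases smul_eq_zero.mp h2 with hc | hc
    · exfalso; apply hne; have := Complex.ofReal_eq_zero.mp hc; linarith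
    · exact hc
  · exact ⟨x + (t₁:ℂ) • y, root t₁ root₁, hBe₁⟩

theorem not_wcomp' (B : H →L[ℂ] H) (hB : IsSelfAdjoint B) (e : H)
    (he : (inner ℂ (B e) e : ℂ) = 0) (hBe : B e ≠ 0) :
    ¬ IsWeaklyComplementable B (ℂ ∙ e) := by
  set S : Submodule ℂ H := ℂ ∙ e with hS
  set P : H →L[ℂ] H := projL S with hP
  have hPsa : IsSelfAdjoint P := isSelfAdjoint_starProjection S
  have hPe : P e = e := by
    show S.starProjection e = e
    rw [Submodule.starProjection_eq_self_iff]
    exact Submodule.mem_span_singleton_self e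
  have heBe : (inner ℂ e (B e) : ℂ) = 0 := by
    rw [← inner_conj_symm, he, map_zero]
  have hBeo : B e ∈ Sᗮ := by
    rw [Submodule.mem_orthogonal]
    intro u hu
    obtain ⟨c, rfl⟩ := Submodule.mem_span_singleton.mp hu
    rw [inner_smul_left, heBe, mul_zero]
  have hPBe : P (B e) = 0 := by
    show (↑(Submodule.orthogonalProjectionOnto S (B e)) : H) = 0
    rw [Submodule.orthogonalProjectionOnto_apply_of_mem_orthogonal hBeo]
    rfl
  have hA0 : blockA B S = 0 := by
    ext z
    show P (B (P z)) = 0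
    have hmem : P z ∈ S := (Submodule.orthogonalProjectionOnto S z).2
    obtain ⟨c, hc⟩ := Submodule.mem_span_singleton.mp hmem
    rw [← hc, map_smul, map_smul, hPBe, smul_zero]
  rintro ⟨m, ⟨hmpos, hm4⟩, hrange⟩
  have hmsa : IsSelfAdjoint m := hmpos.isSelfAdjoint
  have hm40 : m ^ 4 = 0 := by
    rw [hm4, hA0, ← star_eq_adjoint, star_zero, mul_zero]
  have hm2sa : IsSelfAdjoint (m * m) := by
    rw [IsSelfAdjoint, star_mul, hmsa.star_eq]
  have hm20 : m * m = 0 := by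
    apply eq_zero_of_sq_zero' _ hm2sa
    rw [← hm40]; noncomm_ring
  have hm0 : m = 0 := eq_zero_of_sq_zero' m hmsa hm20
  have hb0 : blockB B S = 0 := by
    ext x
    obtain ⟨u, hu⟩ := hrange (LinearMap.mem_range_self _ x)
    rw [zero_apply]; have hu' : m u = blockB B S x := hu; rw [← hu', hm0, zero_apply]
  have hadj : adjoint (blockB B S) = (1 - P) * B * P := by
    rw [← star_eq_adjoint]
    show star (P * B * (1 - P)) = (1 - P) * B * P
    rw [star_mul, star_mul, star_sub, star_one, hPsa.star_eq, hB.star_eq]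
    noncomm_ring
  have hz : ((1 - P) * B * P) e = 0 := by
    rw [← hadj, hb0, ← star_eq_adjoint, star_zero, zero_apply]
  apply hBe
  have h2 : B e - P (B e) = 0 := by
    simpa [ContinuousLinearMap.mul_apply, hPe, sub_apply, one_apply] using hz
  rw [hPBe, sub_zero] at h2
  exact h2

end Aux

/-- A bounded selfadjoint operator `B` is `S`-weakly complementable for every closed
subspace `S` of `H` if and only if `B` is semidefinite. -/
theorem stmt_0 (B : H →L[ℂ] H) (hB : IsSelfAdjoint B) :
    (∀ (S : Submodule ℂ H) [CompleteSpace S], IsWeaklyComplementable B S) ↔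
      (B.IsPositive ∨ (-B).IsPositive) := by
  constructor
  · intro h
    by_contra hc
    push_neg at hc
    obtain ⟨h1, h2⟩ := hc
    have hx : ∃ x, 0 < (inner ℂ (B x) x : ℂ).re := by
      by_contra hno
      push_neg at hno
      apply h2
      refine ⟨isSelfAdjoint_iff_isSymmetric.mp hB.neg, fun x => ?_⟩
      rw [reApplyInnerSelf_apply]
      simp only [neg_apply, inner_neg_left, map_neg, RCLike.re_to_complex]
      linarith [hno x]
    have hy : ∃ y, (inner ℂ (B y) y : ℂ).re < 0 := by
      by_contra hno
      push_neg at hno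
      apply h1
      refine ⟨isSelfAdjoint_iff_isSymmetric.mp hB, fun y => ?_⟩
      rw [reApplyInnerSelf_apply]
      simp only [RCLike.re_to_complex]
      exact hno y
    obtain ⟨e, he, hBe⟩ := exists_neutral' B hB hx hy
    have heC : (inner ℂ (B e) e : ℂ) = 0 := by
      have h3 := (isSelfAdjoint_iff_isSymmetric.mp hB) e e
      simp only [ContinuousLinearMap.coe_coe] at h3
      have h4 : (inner ℂ (B e) e : ℂ) = starRingEnd ℂ (inner ℂ (B e) e : ℂ) := by
        nth_rewrite 1 [h3]
        rw [inner_conj_symm]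
      have him := congrArg Complex.im h4
      rw [Complex.conj_im] at him
      apply Complex.ext
      · simpa using he
      · simp only [Complex.zero_im]
        linarith
    exact not_wcomp' B hB e heC hBe (h (ℂ ∙ e))
  · rintro (hpos | hneg) S _
    · exact wcomp_of_pos' B hpos S
    · obtain ⟨m, ⟨hp, h4⟩, hr⟩ := wcomp_of_pos' (-B) hneg S
      have hA : blockA (-B) S = -(blockA B S) := by
        rw [blockA, blockA]; noncomm_ring
      have hBn : blockB (-B) S = -(blockB B S) := by
        rw [blockB, blockB]; noncomm_ring
      refine ⟨m, ⟨hp, ?_⟩, ?_⟩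
      · rw [h4, hA, ← star_eq_adjoint, ← star_eq_adjoint, star_neg]
        noncomm_ring
      · rintro z ⟨w, hw⟩
        apply hr
        refine ⟨-w, ?_⟩
        rw [hBn]
        simp only [neg_apply, map_neg, neg_neg]
        simpa using hw
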